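/- Let G be a group, let 𝒳 be a family of K-approximate subgroups of G any two of which are N-commensurable, let X₁, …, X_n ∈ 𝒳, let Z := X₁ ∪ ⋯ ∪ X_n, and let s ≥ 1. Then the s-fold product set Zˢ is (nˢ·(NK)^{s−1}·N)-commensurable with every X ∈ 𝒳. -/

import Mathlib

open Pointwise

/-- `A` is a `K`-approximate subgroup of `G`. -/
def IsApproxSubgroup {G : Type*} [Group G] (K : ℕ) (A : Set G) : Prop :=
  (1 : G) ∈ A ∧ A = A⁻¹ ∧ ∃ F : Finset G, F.card ≤ K ∧ A * A ⊆ (F : Set G) * A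

/-- `X` and `Y` are `N`-commensurable subsets of `G`. -/
def NComm {G : Type*} [Group G] (N : ℕ) (X Y : Set G) : Prop :=
  ∃ Z₀ Z₁ : Finset G, Z₀.card ≤ N ∧ Z₁.card ≤ N ∧
    X ⊆ (Z₀ : Set G) * Y ∧ Y ⊆ (Z₁ : Set G) * X

/-- The `s`-fold product of `Z = X₁ ∪ ⋯ ∪ X_n` (members of a uniform family of
commensurable approximate subgroups) is `(nˢ·(NK)^(s-1)·N)`-commensurable with
every member of the family. -/
theorem union_pow_commensurable
    {G : Type*} [Group G] (K N : ℕ) (𝒳 : Set (Set G))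
    (happrox : ∀ X ∈ 𝒳, IsApproxSubgroup K X)
    (hcomm : ∀ X ∈ 𝒳, ∀ Y ∈ 𝒳, NComm N X Y)
    (n : ℕ) (hn : 1 ≤ n) (Xf : Fin n → Set G) (hXf : ∀ i, Xf i ∈ 𝒳)
    (s : ℕ) (hs : 1 ≤ s) (X : Set G) (hX : X ∈ 𝒳) :
    NComm (n ^ s * (N * K) ^ (s - 1) * N) ((⋃ i, Xf i) ^ s) X := by
  classical
  obtain ⟨h1X, hXinv, F, hFcard, hFX⟩ := happrox X hX
  -- N and K are positive
  have hN : 1 ≤ N := by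
    obtain ⟨Z₀, Z₁, h0, h1, hsub, -⟩ := hcomm X hX X hX
    obtain ⟨a, ha, b, hb, -⟩ := Set.mem_mul.mp (hsub h1X)
    exact le_trans (Finset.card_pos.mpr ⟨a, ha⟩) h0
  have hK : 1 ≤ K := by
    obtain ⟨a, ha, b, hb, -⟩ := Set.mem_mul.mp (hFX (Set.mul_mem_mul h1X h1X))
    exact le_trans (Finset.card_pos.mpr ⟨a, ha⟩) hFcard
  -- key covering lemma for members of the family
  have key : ∀ A ∈ 𝒳, ∀ B ∈ 𝒳, ∃ E : Finset G, E.card ≤ N * K ∧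
      A * B ⊆ (E : Set G) * B := by
    intro A hA B hB
    obtain ⟨Z₀, Z₁, h0, h1, hAB, -⟩ := hcomm A hA B hB
    obtain ⟨h1B, hBinv, FB, hFBc, hFB⟩ := happrox B hB
    refine ⟨Z₀ * FB, le_trans Finset.card_mul_le (Nat.mul_le_mul h0 hFBc), ?_⟩
    intro x hx
    obtain ⟨a, ha, b, hb, rfl⟩ := Set.mem_mul.mp hx
    obtain ⟨z, hz, c, hc, rfl⟩ := Set.mem_mul.mp (hAB ha)
    obtain ⟨f, hf, d, hd, hfd⟩ := Set.mem_mul.mp (hFB (Set.mul_mem_mul hc hb))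
    refine Set.mem_mul.mpr ⟨z * f, ?_, d, hd, ?_⟩
    · rw [Finset.coe_mul]; exact Set.mul_mem_mul hz hf
    · rw [mul_assoc, hfd, ← mul_assoc]
  have hE : ∀ j i : Fin n, ∃ E : Finset G, E.card ≤ N * K ∧
      Xf j * Xf i ⊆ (E : Set G) * Xf i := fun j i => key _ (hXf j) _ (hXf i)
  choose E hEcard hEsub using hE
  have hcov : ∀ i : Fin n, ∃ C : Finset G, C.card ≤ N ∧ Xf i ⊆ (C : Set G) * X := by
    intro i
    obtain ⟨Z₀, Z₁, h0, h1, hs1, hs2⟩ := hcomm (Xf i) (hXf i) X hX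
    exact ⟨Z₀, h0, hs1⟩
  choose C hCcard hCsub using hcov
  -- main induction
  have main : ∀ s : ℕ, 1 ≤ s → ∃ T : Fin n → Finset G,
      (∑ i, (T i).card) ≤ n ^ s * (N * K) ^ (s - 1) ∧
      (⋃ i, Xf i) ^ s ⊆ ⋃ i, (T i : Set G) * Xf i := by
    intro s hs
    induction s, hs using Nat.le_induction with
    | base =>
      refine ⟨fun _ => {1}, ?_, ?_⟩
      · simp
      · rw [pow_one]
        refine Set.iUnion_mono fun i => ?_
        simp
    | succ s hs ih =>
      obtain ⟨T, hTcard, hTsub⟩ := ih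
      refine ⟨fun i => Finset.univ.biUnion fun j => T j * E j i, ?_, ?_⟩
      · calc ∑ i, (Finset.univ.biUnion fun j => T j * E j i).card
            ≤ ∑ i : Fin n, ∑ j : Fin n, (T j * E j i).card :=
              Finset.sum_le_sum fun i _ => Finset.card_biUnion_le
          _ ≤ ∑ _i : Fin n, ∑ j : Fin n, (T j).card * (N * K) := by
              refine Finset.sum_le_sum fun i _ => Finset.sum_le_sum fun j _ => ?_
              exact le_trans Finset.card_mul_le (Nat.mul_le_mul_left _ (hEcard j i))
          _ = n * ((∑ j, (T j).card) * (N * K)) := by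
              rw [← Finset.sum_mul, Finset.sum_const, Finset.card_univ,
                Fintype.card_fin, smul_eq_mul]
          _ ≤ n * ((n ^ s * (N * K) ^ (s - 1)) * (N * K)) :=
              Nat.mul_le_mul_left _ (Nat.mul_le_mul_right _ hTcard)
          _ = n ^ (s + 1) * (N * K) ^ (s + 1 - 1) := by
              obtain ⟨t, rfl⟩ : ∃ t, s = t + 1 := ⟨s - 1, (Nat.sub_add_cancel hs).symm⟩
              simp only [Nat.add_sub_cancel]
              ring
      · intro x hx
        rw [pow_succ] at hx
        obtain ⟨y, hy, z, hz, rfl⟩ := Set.mem_mul.mp hx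
        obtain ⟨j, hyj⟩ := Set.mem_iUnion.mp (hTsub hy)
        obtain ⟨t, ht, w, hw, rfl⟩ := Set.mem_mul.mp hyj
        obtain ⟨i, hzi⟩ := Set.mem_iUnion.mp hz
        obtain ⟨e, he, v, hv, hev⟩ := Set.mem_mul.mp (hEsub j i (Set.mul_mem_mul hw hzi))
        refine Set.mem_iUnion.mpr ⟨i, Set.mem_mul.mpr ⟨t * e, ?_, v, hv, ?_⟩⟩
        · refine Finset.mem_coe.mpr (Finset.mem_biUnion.mpr ⟨j, Finset.mem_univ j, ?_⟩)
          exact Finset.mul_mem_mul (Finset.mem_coe.mp ht) (Finset.mem_coe.mp he)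
        · rw [mul_assoc, hev, ← mul_assoc]
  obtain ⟨T, hTcard, hTsub⟩ := main s hs
  set i0 : Fin n := ⟨0, hn⟩
  have h1i0 : (1 : G) ∈ Xf i0 := (happrox _ (hXf i0)).1
  have h1Z : (1 : G) ∈ ⋃ i, Xf i := Set.mem_iUnion.mpr ⟨i0, h1i0⟩
  have hZpow : (⋃ i, Xf i) ⊆ (⋃ i, Xf i) ^ s := by
    obtain ⟨k, rfl⟩ : ∃ k, s = k + 1 := ⟨s - 1, (Nat.sub_add_cancel hs).symm⟩
    intro z hz
    rw [pow_succ]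
    exact Set.mem_mul.mpr ⟨1, Set.one_mem_pow h1Z, z, hz, one_mul z⟩
  obtain ⟨W₀, W₁, hW₀, hW₁, hXW, hWX⟩ := hcomm X hX (Xf i0) (hXf i0)
  have hpos : 0 < n ^ s * (N * K) ^ (s - 1) :=
    Nat.mul_pos (Nat.pow_pos hn) (Nat.pow_pos (Nat.mul_pos hN hK))
  refine ⟨Finset.univ.biUnion fun i => T i * C i, W₀, ?_, ?_, ?_, ?_⟩
  · calc (Finset.univ.biUnion fun i => T i * C i).card
        ≤ ∑ i : Fin n, (T i * C i).card := Finset.card_biUnion_le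
      _ ≤ ∑ i : Fin n, (T i).card * N := Finset.sum_le_sum fun i _ =>
          le_trans Finset.card_mul_le (Nat.mul_le_mul_left _ (hCcard i))
      _ = (∑ i, (T i).card) * N := by rw [Finset.sum_mul]
      _ ≤ n ^ s * (N * K) ^ (s - 1) * N := Nat.mul_le_mul_right _ hTcard
  · calc W₀.card ≤ N := hW₀
      _ ≤ n ^ s * (N * K) ^ (s - 1) * N := Nat.le_mul_of_pos_left N hpos
  · intro x hx
    obtain ⟨i, hxi⟩ := Set.mem_iUnion.mp (hTsub hx)
    obtain ⟨t, ht, w, hw, rfl⟩ := Set.mem_mul.mp hxi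
    obtain ⟨c, hc, v, hv, hcv⟩ := Set.mem_mul.mp (hCsub i hw)
    refine Set.mem_mul.mpr ⟨t * c, ?_, v, hv, by rw [mul_assoc, hcv]⟩
    refine Finset.mem_coe.mpr (Finset.mem_biUnion.mpr ⟨i, Finset.mem_univ i, ?_⟩)
    exact Finset.mul_mem_mul (Finset.mem_coe.mp ht) (Finset.mem_coe.mp hc)
  · intro x hx
    obtain ⟨w, hw, a, ha, rfl⟩ := Set.mem_mul.mp (hXW hx)
    exact Set.mem_mul.mpr ⟨w, hw, a, hZpow (Set.mem_iUnion.mpr ⟨i0, ha⟩), rfl⟩
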